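/- arXiv:2311.00372 — 2 statements merged into one kernel-verified Lean document; each statement's English description precedes it below -/
import Mathlib

section
/- Let X ⊂ ℝ^d be a nonempty compact convex set with X ⊆ R̄·B_d, and let δ ∈ (0,1). Then for every x ∈ ℝ^d, ‖ P_X[x] − P_{(1−δ)X}[x] ‖ ≤ δ·R̄. -/
open MeasureTheory ProbabilityTheory Real Set Filter Pointwise
open scoped Classical ENNReal RealInnerProductSpace

noncomputable section

variable {d : ℕ}

/-- Euclidean metric projection onto a set: a nearest point of `C`, if one exists. -/
noncomputable def metricProj (C : Set (EuclideanSpace ℝ (Fin d)))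
    (x : EuclideanSpace ℝ (Fin d)) : EuclideanSpace ℝ (Fin d) :=
  if h : ∃ y, y ∈ C ∧ ∀ c ∈ C, dist x y ≤ dist x c then h.choose else x

/-- The standard Gaussian measure `N(0, I_d)` on `ℝ^d`. -/
noncomputable def stdGaussian (d : ℕ) : Measure (EuclideanSpace ℝ (Fin d)) :=
  (Measure.pi fun _ : Fin d => gaussianReal 0 1).map
    (MeasurableEquiv.toLp 2 (Fin d → ℝ))

/-- The uniform distribution on the sphere of radius `√d` in `ℝ^d`,
realized as the pushforward of the standard Gaussian under radial normalization. -/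
noncomputable def uniformSphere (d : ℕ) : Measure (EuclideanSpace ℝ (Fin d)) :=
  (stdGaussian d).map (fun z => (Real.sqrt d / ‖z‖) • z)

/-- The set `S(x,r) = {(s - x)/r : s ∈ X}`. -/
def sShift (X : Set (EuclideanSpace ℝ (Fin d))) (x : EuclideanSpace ℝ (Fin d)) (r : ℝ) :
    Set (EuclideanSpace ℝ (Fin d)) :=
  (fun s => r⁻¹ • (s - x)) '' X

/-- The law `Z(x,r)` of the Gaussian perturbation projected onto `S(x,r)`. -/
noncomputable def zDist (X : Set (EuclideanSpace ℝ (Fin d))) (x : EuclideanSpace ℝ (Fin d))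
    (r : ℝ) : Measure (EuclideanSpace ℝ (Fin d)) :=
  (stdGaussian d).map (metricProj (sShift X x r))

/-- `h` is `Λ`-Lipschitz on `X`. -/
def LipOn (h : EuclideanSpace ℝ (Fin d) → ℝ) (Λ : ℝ)
    (X : Set (EuclideanSpace ℝ (Fin d))) : Prop :=
  ∀ x ∈ X, ∀ y ∈ X, |h x - h y| ≤ Λ * ‖x - y‖

/-- `h` is `L`-smooth on `X`: differentiable with `L`-Lipschitz gradient on `X`. -/
def IsSmoothOn (h : EuclideanSpace ℝ (Fin d) → ℝ) (L : ℝ)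
    (X : Set (EuclideanSpace ℝ (Fin d))) : Prop :=
  Differentiable ℝ h ∧ ∀ x ∈ X, ∀ y ∈ X, ‖gradient h x - gradient h y‖ ≤ L * ‖x - y‖

/-- The gradient mapping `𝔤(x; M) = M (x - P_X[x - (1/M) ∇F(x)])`. -/
noncomputable def gradMap (X : Set (EuclideanSpace ℝ (Fin d)))
    (F : EuclideanSpace ℝ (Fin d) → ℝ) (M : ℝ) (x : EuclideanSpace ℝ (Fin d)) :
    EuclideanSpace ℝ (Fin d) :=
  M • (x - metricProj X (x - (1 / M) • gradient F x))

/-- The 2-ZFGD iterates, given a realization `zbar` of the Gaussian samples. -/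
noncomputable def zfgd (X : Set (EuclideanSpace ℝ (Fin d))) (δ η : ℝ) (r : ℕ → ℝ)
    (f φ : EuclideanSpace ℝ (Fin d) → ℝ) (zbar : ℕ → EuclideanSpace ℝ (Fin d))
    (x0 : EuclideanSpace ℝ (Fin d)) : ℕ → EuclideanSpace ℝ (Fin d)
  | 0 => x0
  | k + 1 =>
    let x := zfgd X δ η r f φ zbar x0 k
    let z := metricProj (sShift X x (r k)) (zbar k)
    metricProj ((1 - δ) • X)
      (x - η • (gradient f x + ((φ (x + r k • z) - φ x) / r k) • z))

/-- The box `Π_β [l β, u β] ⊆ ℝ^d`. -/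
def box (l u : Fin d → ℝ) : Set (EuclideanSpace ℝ (Fin d)) :=
  {x | ∀ β, x β ∈ Set.Icc (l β) (u β)}

/-- `h` is `(L 1, …, L d)`-coordinatewise smooth on `X`. -/
def CoordSmoothOn (h : EuclideanSpace ℝ (Fin d) → ℝ) (L : Fin d → ℝ)
    (X : Set (EuclideanSpace ℝ (Fin d))) : Prop :=
  Differentiable ℝ h ∧ ∀ (β : Fin d), ∀ x ∈ X, ∀ t : ℝ,
    x + t • EuclideanSpace.single β 1 ∈ X →
    |gradient h (x + t • EuclideanSpace.single β 1) β - gradient h x β| ≤ L β * |t|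

/-- Joint law of a pair: uniform coordinate on `Fin d` and uniform sign on `{-1, 1}`. -/
noncomputable def unifPair (d : ℕ) : Measure (Fin d × ℝ) :=
  (((d : ℝ≥0∞)⁻¹ • Measure.count : Measure (Fin d))).prod
    (((2 : ℝ≥0∞)⁻¹ • (Measure.dirac (-1) + Measure.dirac 1) : Measure ℝ))

/-- The RZFCD iterates, given realizations `a` of the coordinate draws and `s` of the
sign draws. -/
noncomputable def rzfcd (l u η : Fin d → ℝ) (r : Fin d → ℕ → ℝ)
    (f φ : EuclideanSpace ℝ (Fin d) → ℝ)
    (a : ℕ → Fin d) (s : ℕ → ℝ) (x0 : EuclideanSpace ℝ (Fin d)) :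
    ℕ → EuclideanSpace ℝ (Fin d)
  | 0 => x0
  | k + 1 =>
    let x := rzfcd l u η r f φ a s x0 k
    let β := a k
    let z : ℝ := if u β < x β + r β k then -1 else if x β - r β k < l β then 1 else s k
    let g : ℝ := gradient f x β +
      ((φ (x + (r β k * z) • EuclideanSpace.single β 1) - φ x) / r β k) * z
    WithLp.toLp 2 (Function.update x β (max (l β) (min (u β) (x β - η β * g))))


lemma metricProj_spec' (C : Set (EuclideanSpace ℝ (Fin d))) (hC : IsCompact C)
    (hne : C.Nonempty) (hconv : Convex ℝ C) (x : EuclideanSpace ℝ (Fin d)) :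
    metricProj C x ∈ C ∧ ∀ c ∈ C, ⟪x - metricProj C x, c - metricProj C x⟫ ≤ 0 := by
  have hcont : ContinuousOn (fun c => dist x c) C :=
    (continuous_const.dist continuous_id).continuousOn
  obtain ⟨y, hy, hmin⟩ := hC.exists_isMinOn hne hcont
  have hex : ∃ y, y ∈ C ∧ ∀ c ∈ C, dist x y ≤ dist x c := ⟨y, hy, fun c hc => hmin hc⟩
  rw [metricProj, dif_pos hex]
  obtain ⟨hv, hvmin⟩ := hex.choose_spec
  refine ⟨hv, ?_⟩
  rw [← norm_eq_iInf_iff_real_inner_le_zero hconv hv]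
  haveI : Nonempty C := ⟨⟨_, hv⟩⟩
  refine le_antisymm (le_ciInf fun w => hvmin w w.2)
    (ciInf_le ⟨0, fun _ ⟨_, h⟩ => h ▸ norm_nonneg _⟩ (⟨_, hv⟩ : C))

/-- Lemma 6 (distance between projections onto `X` and onto the shrunk set `(1-δ)X`). -/
theorem proj_shrink_difference (d : ℕ) (Rhigh : ℝ)
    (X : Set (EuclideanSpace ℝ (Fin d))) (hne : X.Nonempty)
    (hXc : IsCompact X) (hXconv : Convex ℝ X) (hXu : X ⊆ Metric.closedBall 0 Rhigh)
    (δ : ℝ) (hδ0 : 0 < δ) (hδ1 : δ < 1) :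
    ∀ x : EuclideanSpace ℝ (Fin d),
      ‖metricProj X x - metricProj ((1 - δ) • X) x‖ ≤ δ * Rhigh := by
  intro x
  obtain ⟨hpX, hp⟩ := metricProj_spec' X hXc hne hXconv x
  set p := metricProj X x with hpdef
  have h1δ : (0:ℝ) < 1 - δ := by linarith
  obtain ⟨hqX, hq⟩ := metricProj_spec' ((1 - δ) • X) (hXc.smul (1 - δ))
    (hne.smul_set) (hXconv.smul (1 - δ)) x
  set q := metricProj ((1 - δ) • X) x with hqdef
  obtain ⟨s, hs, hqs⟩ := hqX
  have hA : ⟪x - p, s - p⟫ ≤ 0 := hp s hs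
  have hB : ⟪x - q, (1 - δ) • p - q⟫ ≤ 0 := hq _ (Set.smul_mem_smul_set hpX)
  have hB' : ⟪x - q, p - s⟫ ≤ 0 := by
    have : (1 - δ) • p - q = (1 - δ) • (p - s) := by
      rw [← hqs, smul_sub]
    rw [this, real_inner_smul_right] at hB
    nlinarith
  have hkey : ⟪q - p, s - p⟫ ≤ 0 := by
    have hsplit : ⟪x - p, s - p⟫ = ⟪x - q, s - p⟫ + ⟪q - p, s - p⟫ := by
      rw [← inner_add_left]
      congr 1
      abel
    have h2 : ⟪x - q, s - p⟫ = - ⟪x - q, p - s⟫ := by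
      rw [← inner_neg_right]
      congr 1
      abel
    nlinarith [hA, hB']
  have hsn : ‖s‖ ≤ Rhigh := by
    simpa using Metric.mem_closedBall.mp (hXu hs)
  have hpq : p - q = (p - s) + δ • s := by
    rw [← hqs]; module
  have hsq : ‖p - q‖ ^ 2 ≤ δ * Rhigh * ‖p - q‖ := by
    have : ‖p - q‖ ^ 2 = ⟪p - q, p - s⟫ + δ * ⟪p - q, s⟫ := by
      rw [← real_inner_self_eq_norm_sq]
      nth_rewrite 2 [hpq]
      rw [inner_add_right, real_inner_smul_right]
    have h3 : ⟪p - q, p - s⟫ ≤ 0 := by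
      have : ⟪p - q, p - s⟫ = ⟪q - p, s - p⟫ := by
        rw [show q - p = -(p - q) by abel, show s - p = -(p - s) by abel,
          inner_neg_neg]
      linarith [this ▸ hkey]
    have h4 : ⟪p - q, s⟫ ≤ ‖p - q‖ * Rhigh := by
      calc ⟪p - q, s⟫ ≤ ‖p - q‖ * ‖s‖ := real_inner_le_norm _ _
        _ ≤ ‖p - q‖ * Rhigh := by
            exact mul_le_mul_of_nonneg_left hsn (norm_nonneg _)
    nlinarith
  rcases eq_or_lt_of_le (norm_nonneg (p - q)) with h0 | h0
  · rw [← h0]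
    have hR : 0 ≤ Rhigh := le_trans (norm_nonneg s) hsn
    positivity
  · nlinarith

end
end

section
/- Let X ⊂ ℝ^d be a compact convex set, δ ∈ (0,1), and let F : X → ℝ be L_F-smooth. Let η ∈ (0, 1/(2L_F)], x ∈ (1−δ)X, g ∈ ℝ^d, and set x⁺ := P_{(1−δ)X}[x − η g]. Then for every x̃ ∈ (1−δ)X: (1/(2η))·( ‖x̃ − x⁺‖² − ‖x̃ − x‖² ) ≤ ⟨g, x̃ − x⟩ + η·‖g − ∇F(x)‖² + F(x) − F(x⁺). -/
open MeasureTheory ProbabilityTheory Real Set Filter Pointwise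
open scoped Classical ENNReal RealInnerProductSpace

noncomputable section

variable {d : ℕ}

private lemma descent_aux {E : Type*} [NormedAddCommGroup E] [InnerProductSpace ℝ E]
    [CompleteSpace E] (F : E → ℝ) (L : ℝ) (hdiff : Differentiable ℝ F) (a v : E)
    (hlip : ∀ s ∈ Set.Icc (0:ℝ) 1, ∀ t ∈ Set.Icc (0:ℝ) 1,
      ‖gradient F (a + t • v) - gradient F (a + s • v)‖ ≤ L * |t - s| * ‖v‖) :
    F (a + v) ≤ F a + (inner ℝ (gradient F a) v : ℝ) + L / 2 * ‖v‖ ^ 2 := by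
  set γ : ℝ → E := fun t => a + t • v with hγ
  have hderiv : ∀ t : ℝ, HasDerivAt (fun t => F (γ t))
      (inner ℝ (gradient F (γ t)) v : ℝ) t := by
    intro t
    have h1 : HasDerivAt γ v t := by simpa [hγ] using ((hasDerivAt_id t).smul_const v).const_add a
    have h2 : HasFDerivAt F (fderiv ℝ F (γ t)) (γ t) := (hdiff (γ t)).hasFDerivAt
    have h3 := h2.comp_hasDerivAt t h1
    have e : (inner ℝ (gradient F (γ t)) v : ℝ) = fderiv ℝ F (γ t) v := by
      simp only [gradient, InnerProductSpace.toDual_symm_apply]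
    rw [e]; exact h3
  have hlipOn : LipschitzOnWith (Real.toNNReal (L * ‖v‖ * ‖v‖))
      (fun t => (inner ℝ (gradient F (γ t)) v : ℝ)) (Set.Icc 0 1) := by
    apply LipschitzOnWith.of_dist_le_mul
    intro s hs t ht
    rw [Real.dist_eq, Real.dist_eq, ← inner_sub_left]
    calc |(inner ℝ (gradient F (γ s) - gradient F (γ t)) v : ℝ)|
        ≤ ‖gradient F (γ s) - gradient F (γ t)‖ * ‖v‖ := abs_real_inner_le_norm _ _
      _ ≤ (L * |s - t| * ‖v‖) * ‖v‖ := by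
          gcongr; exact hlip t ht s hs
      _ ≤ Real.toNNReal (L * ‖v‖ * ‖v‖) * |s - t| := by
          rw [Real.coe_toNNReal']
          rcases le_or_gt (L * ‖v‖ * ‖v‖) 0 with h | h
          · have h0 : L * |s - t| * ‖v‖ * ‖v‖ ≤ 0 := by
              rcases abs_nonneg (s - t) |>.eq_or_lt with h1 | h1
              · nlinarith [abs_nonneg (s - t), norm_nonneg v]
              · nlinarith [norm_nonneg v]
            calc L * |s - t| * ‖v‖ * ‖v‖ ≤ 0 := h0
              _ ≤ _ := by positivity
          · rw [max_eq_left h.le]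
            nlinarith [abs_nonneg (s - t), norm_nonneg v, h]
  have hcont : ContinuousOn (fun t => (inner ℝ (gradient F (γ t)) v : ℝ)) (Set.Icc 0 1) :=
    hlipOn.continuousOn
  have hInt : IntervalIntegrable (fun t => (inner ℝ (gradient F (γ t)) v : ℝ))
      MeasureTheory.volume 0 1 := by
    apply ContinuousOn.intervalIntegrable
    rwa [Set.uIcc_of_le zero_le_one]
  have hFTC : ∫ t in (0:ℝ)..1, (inner ℝ (gradient F (γ t)) v : ℝ) = F (γ 1) - F (γ 0) :=
    intervalIntegral.integral_eq_sub_of_hasDerivAt (fun t _ => hderiv t) hInt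
  have hγ0 : γ 0 = a := by simp [hγ]
  have hγ1 : γ 1 = a + v := by simp [hγ]
  have hIntLin : IntervalIntegrable (fun t : ℝ => L * ‖v‖ ^ 2 * t + (inner ℝ (gradient F a) v : ℝ))
      MeasureTheory.volume 0 1 := by
    apply ContinuousOn.intervalIntegrable
    fun_prop
  have hmono : ∫ t in (0:ℝ)..1, (inner ℝ (gradient F (γ t)) v : ℝ)
      ≤ ∫ t in (0:ℝ)..1, (L * ‖v‖ ^ 2 * t + (inner ℝ (gradient F a) v : ℝ)) := by
    apply intervalIntegral.integral_mono_on zero_le_one hInt hIntLin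
    intro t ht
    have h1 : (inner ℝ (gradient F (γ t)) v : ℝ) - (inner ℝ (gradient F a) v : ℝ)
        = (inner ℝ (gradient F (γ t) - gradient F a) v : ℝ) := by rw [inner_sub_left]
    have h2 : (inner ℝ (gradient F (γ t) - gradient F a) v : ℝ)
        ≤ ‖gradient F (γ t) - gradient F a‖ * ‖v‖ := real_inner_le_norm _ _
    have h3 : ‖gradient F (γ t) - gradient F a‖ ≤ L * |t - 0| * ‖v‖ := by
      have := hlip 0 ⟨le_refl 0, zero_le_one⟩ t ht
      simpa [hγ] using this
    have h4 : |t - 0| = t := by rw [sub_zero, abs_of_nonneg ht.1]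
    rw [h4] at h3
    have h5 : ‖gradient F (γ t) - gradient F a‖ * ‖v‖ ≤ (L * t * ‖v‖) * ‖v‖ := by
      gcongr
    nlinarith [norm_nonneg v]
  have hval : ∫ t in (0:ℝ)..1, (L * ‖v‖ ^ 2 * t + (inner ℝ (gradient F a) v : ℝ))
      = L / 2 * ‖v‖ ^ 2 + (inner ℝ (gradient F a) v : ℝ) := by
    rw [intervalIntegral.integral_add (by apply ContinuousOn.intervalIntegrable; fun_prop)
      (by apply ContinuousOn.intervalIntegrable; fun_prop),
      intervalIntegral.integral_const_mul, integral_id,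
      intervalIntegral.integral_const]
    simp
    ring
  rw [hγ0, hγ1] at hFTC
  rw [hval] at hmono
  linarith

set_option maxHeartbeats 1000000 in
/-- Lemma 7 (one-step descent inequality for projected SGD-type updates). -/
theorem projected_step_descent (d : ℕ) (X : Set (EuclideanSpace ℝ (Fin d)))
    (hXc : IsCompact X) (hXconv : Convex ℝ X) (h0 : (0 : EuclideanSpace ℝ (Fin d)) ∈ X)
    (δ : ℝ) (hδ0 : 0 < δ) (hδ1 : δ < 1)
    (F : EuclideanSpace ℝ (Fin d) → ℝ) (LF : ℝ) (hLF : 0 < LF)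
    (hF : IsSmoothOn F LF X)
    (η : ℝ) (hη0 : 0 < η) (hηL : η ≤ 1 / (2 * LF))
    (x : EuclideanSpace ℝ (Fin d)) (hx : x ∈ (1 - δ) • X)
    (g : EuclideanSpace ℝ (Fin d)) :
    ∀ xt ∈ (1 - δ) • X,
      (1 / (2 * η)) *
          (‖xt - metricProj ((1 - δ) • X) (x - η • g)‖ ^ 2 - ‖xt - x‖ ^ 2) ≤
        (inner ℝ g (xt - x) : ℝ) + η * ‖g - gradient F x‖ ^ 2
          + F x - F (metricProj ((1 - δ) • X) (x - η • g)) := by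
  intro xt hxt
  have hδ' : (0:ℝ) < 1 - δ := by linarith
  set C : Set (EuclideanSpace ℝ (Fin d)) := (1 - δ) • X with hCdef
  set u : EuclideanSpace ℝ (Fin d) := x - η • g with hudef
  set p : EuclideanSpace ℝ (Fin d) := metricProj C u with hpdef
  have hCsub : C ⊆ X := by
    rintro _ ⟨s, hs, rfl⟩
    have h := hXconv h0 hs (a := δ) (b := 1 - δ) hδ0.le (by linarith) (by ring)
    simpa using h
  have hCconv : Convex ℝ C := hXconv.smul _
  have hCc : IsCompact C := hXc.smul _
  have hxC : x ∈ C := hx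
  obtain ⟨p0, hp0C, hp0⟩ := hCc.exists_infDist_eq_dist ⟨x, hx⟩ u
  have hex : ∃ y, y ∈ C ∧ ∀ c ∈ C, dist u y ≤ dist u c :=
    ⟨p0, hp0C, fun c hc => hp0 ▸ Metric.infDist_le_dist_of_mem hc⟩
  have hp : p ∈ C ∧ ∀ c ∈ C, dist u p ≤ dist u c := by
    rw [hpdef, metricProj, dif_pos hex]
    exact hex.choose_spec
  clear_value p
  clear_value u
  haveI : Nonempty C := ⟨⟨x, hx⟩⟩
  have hmin : ‖u - p‖ = ⨅ w : C, ‖u - w‖ := by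
    apply le_antisymm
    · exact le_ciInf fun w => by
        rw [← dist_eq_norm, ← dist_eq_norm]; exact hp.2 w w.2
    · have hbdd : BddBelow (Set.range fun w : C => ‖u - w‖) := by
        refine ⟨0, ?_⟩
        rintro y ⟨w, rfl⟩
        exact norm_nonneg _
      exact ciInf_le hbdd ⟨p, hp.1⟩
  have hvar : (inner ℝ (u - p) (xt - p) : ℝ) ≤ 0 :=
    (norm_eq_iInf_iff_real_inner_le_zero hCconv hp.1).mp hmin xt hxt
  -- variational inequality rearranged
  have hup : u - p = (x - p) - η • g := by rw [hudef]; abel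
  rw [hup, inner_sub_left, real_inner_smul_left] at hvar
  -- split inner ℝ products
  have ksplit : (inner ℝ g (xt - p) : ℝ)
      = (inner ℝ g (xt - x) : ℝ) + ((inner ℝ (g - gradient F x) (x - p) : ℝ)
        + (inner ℝ (gradient F x) (x - p) : ℝ)) := by
    rw [show xt - p = (xt - x) + (x - p) by abel, inner_add_right, inner_sub_left]
    ring
  have k1 : (inner ℝ (x - p) (xt - p) : ℝ) ≤ η * ((inner ℝ g (xt - x) : ℝ)
      + ((inner ℝ (g - gradient F x) (x - p) : ℝ) + (inner ℝ (gradient F x) (x - p) : ℝ))) := by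
    rw [← ksplit]; linarith
  -- norm identity
  have id1 : ‖xt - p‖ ^ 2 - ‖xt - x‖ ^ 2
      = 2 * (inner ℝ (x - p) (xt - p) : ℝ) - ‖x - p‖ ^ 2 := by
    have h := norm_sub_sq_real (xt - p) (x - p)
    rw [show xt - p - (x - p) = xt - x by abel, real_inner_comm] at h
    linarith
  -- descent lemma
  have hpX : p ∈ X := hCsub hp.1
  have hxX : x ∈ X := hCsub hxC
  have hseg : ∀ t ∈ Set.Icc (0:ℝ) 1, x + t • (p - x) ∈ X := fun t ht =>
    hXconv.add_smul_sub_mem hxX hpX ht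
  have hdesc := descent_aux F LF hF.1 x (p - x) (fun s hs t ht => by
    have h := hF.2 _ (hseg t ht) _ (hseg s hs)
    have he : (x + t • (p - x)) - (x + s • (p - x)) = (t - s) • (p - x) := by
      rw [sub_smul]; abel
    rw [he, norm_smul, Real.norm_eq_abs, ← mul_assoc] at h
    exact h)
  rw [add_sub_cancel] at hdesc
  have hdesc' : (inner ℝ (gradient F x) (x - p) : ℝ)
      ≤ F x - F p + LF / 2 * ‖x - p‖ ^ 2 := by
    have h1 : (inner ℝ (gradient F x) (p - x) : ℝ)
        = -(inner ℝ (gradient F x) (x - p) : ℝ) := by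
      rw [show p - x = -(x - p) by abel, inner_neg_right]
    have h2 : ‖p - x‖ = ‖x - p‖ := norm_sub_rev _ _
    rw [h1, h2] at hdesc
    linarith
  -- multiplied facts
  have hdescm := mul_le_mul_of_nonneg_left hdesc' hη0.le
  have h2LF : η * (2 * LF) ≤ 1 := (le_div_iff₀ (by positivity)).mp hηL
  have hcoefm := mul_le_mul_of_nonneg_right h2LF (sq_nonneg ‖x - p‖)
  have young2 : 2 * η * (inner ℝ (g - gradient F x) (x - p) : ℝ)
      ≤ 2 * η ^ 2 * ‖g - gradient F x‖ ^ 2 + ‖x - p‖ ^ 2 / 2 := by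
    nlinarith [real_inner_le_norm (g - gradient F x) (x - p),
      sq_nonneg (2 * η * ‖g - gradient F x‖ - ‖x - p‖), hη0,
      norm_nonneg (g - gradient F x), norm_nonneg (x - p)]
  rw [one_div, inv_mul_le_iff₀ (by positivity : (0:ℝ) < 2 * η)]
  nlinarith [k1, id1, hdescm, hcoefm, young2, sq_nonneg ‖x - p‖]

end
end
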